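/- Let I ⊆ ℝ be an open interval and let f_n (n ∈ ℕ) and f be convex real-valued functions on I such that f_n → f uniformly on every compact subset of I. Then the left derivatives converge in L²_loc: for every compact interval [c,d] ⊂ I, ∫_{[c,d]} (∂_ℓ f_n(z) − ∂_ℓ f(z))² dz → 0 as n → ∞. -/

import Mathlib

open Filter Set MeasureTheory
open scoped Topology

lemma aux_slope_le_slope {I : Set ℝ} {F : ℝ → ℝ} (hF : ConvexOn ℝ I F)
    {a b p q : ℝ} (ha : a ∈ I) (hb : b ∈ I) (hp : p ∈ I) (hq : q ∈ I)
    (hab : a < b) (hpq : p < q) (hap : a ≤ p) (hbq : b ≤ q) :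
    (F b - F a) / (b - a) ≤ (F q - F p) / (q - p) := by
  have haq : a < q := lt_of_lt_of_le hab hbq
  have h1 : (F b - F a) / (b - a) ≤ (F q - F a) / (q - a) :=
    hF.secant_mono ha hb hq hab.ne' haq.ne' hbq
  have h2 : (F a - F q) / (a - q) ≤ (F p - F q) / (p - q) :=
    hF.secant_mono hq ha hp haq.ne hpq.ne hap
  have e1 : (F a - F q) / (a - q) = (F q - F a) / (q - a) := by
    rw [← neg_div_neg_eq]; congr 1 <;> ring
  have e2 : (F p - F q) / (p - q) = (F q - F p) / (q - p) := by
    rw [← neg_div_neg_eq]; congr 1 <;> ring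
  rw [e1, e2] at h2
  linarith

lemma aux_left_deriv_bounds {I : Set ℝ} {F : ℝ → ℝ} (hF : ConvexOn ℝ I F)
    {a x b D : ℝ} (ha : a ∈ I) (hb : b ∈ I) (hax : a < x) (hxb : x < b)
    (hD : HasDerivWithinAt F D (Iio x) x) :
    (F x - F a) / (x - a) ≤ D ∧ D ≤ (F b - F x) / (b - x) := by
  have hIOC : OrdConnected I := hF.1.ordConnected
  have hx : x ∈ I := hIOC.out ha hb ⟨hax.le, hxb.le⟩
  have hT : Tendsto (slope F x) (𝓝[<] x) (𝓝 D) := by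
    have h := hasDerivWithinAt_iff_tendsto_slope.1 hD
    rwa [Set.diff_singleton_eq_self (notMem_Iio.2 le_rfl)] at h
  have hmem : Ioo a x ∈ 𝓝[<] x := Ioo_mem_nhdsLT_of_mem ⟨hax, le_rfl⟩
  constructor
  · refine ge_of_tendsto hT ?_
    filter_upwards [hmem] with y hy
    have hyI : y ∈ I := hIOC.out ha hx ⟨hy.1.le, hy.2.le⟩
    rw [slope_def_field]
    calc (F x - F a) / (x - a) = (F a - F x) / (a - x) := by
          rw [← neg_div_neg_eq]; congr 1 <;> ring
      _ ≤ (F y - F x) / (y - x) := hF.secant_mono hx ha hyI hax.ne hy.2.ne hy.1.le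
  · refine le_of_tendsto hT ?_
    filter_upwards [hmem] with y hy
    have hyI : y ∈ I := hIOC.out ha hx ⟨hy.1.le, hy.2.le⟩
    rw [slope_def_field]
    exact hF.secant_mono hx hyI hb hy.2.ne hxb.ne' (hy.2.le.trans hxb.le)

set_option maxHeartbeats 1000000 in
theorem stmt_7 (I : Set ℝ) (hIopen : IsOpen I) (hIconn : I.OrdConnected)
    (f : ℕ → ℝ → ℝ) (g : ℝ → ℝ)
    (hf : ∀ n, ConvexOn ℝ I (f n)) (hg : ConvexOn ℝ I g)
    (Dl : ℕ → ℝ → ℝ) (Dlg : ℝ → ℝ)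
    (hDl : ∀ n, ∀ x ∈ I, HasDerivWithinAt (f n) (Dl n x) (Iio x) x)
    (hDlg : ∀ x ∈ I, HasDerivWithinAt g (Dlg x) (Iio x) x)
    (hunif : ∀ K : Set ℝ, IsCompact K → K ⊆ I →
      TendstoUniformlyOn (fun n x => f n x) g atTop K) :
    ∀ c d : ℝ, Set.Icc c d ⊆ I →
      Tendsto (fun n => ∫ z in Set.Icc c d, (Dl n z - Dlg z) ^ 2)
        atTop (nhds 0) := by
  intro c d hcd
  by_cases hle : c ≤ d
  swap
  · have : Icc c d = ∅ := Icc_eq_empty hle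
    simp only [this, Measure.restrict_empty, integral_zero_measure]
    exact tendsto_const_nhds
  -- a thickened interval inside I
  obtain ⟨h₀, hh₀, hK⟩ : ∃ h₀ : ℝ, 0 < h₀ ∧ Icc (c - 3 * h₀) (d + 3 * h₀) ⊆ I := by
    obtain ⟨δ, hδpos, hδ⟩ := isCompact_Icc.exists_thickening_subset_open hIopen hcd
    refine ⟨δ / 4, by positivity, ?_⟩
    intro z hz
    apply hδ
    rw [Metric.mem_thickening_iff]
    refine ⟨max c (min z d), ⟨le_max_left _ _, max_le hle (min_le_right _ _)⟩, ?_⟩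
    rw [Real.dist_eq, abs_lt]
    have hz1 := hz.1; have hz2 := hz.2
    rcases le_total z d with h | h
    · rcases le_total c z with h' | h'
      · rw [min_eq_left h, max_eq_right h']
        constructor <;> linarith
      · rw [min_eq_left h, max_eq_left h']
        constructor <;> linarith
    · rw [min_eq_right h, max_eq_right (le_trans hle (by linarith))]
      constructor <;> linarith
  have memI : ∀ z : ℝ, c - 3 * h₀ ≤ z → z ≤ d + 3 * h₀ → z ∈ I := fun z h1 h2 => hK ⟨h1, h2⟩
  have gcont : ContinuousOn g I := hg.continuousOn hIopen
  have hcI : c ∈ I := hcd ⟨le_rfl, hle⟩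
  have hdI : d ∈ I := hcd ⟨hle, le_rfl⟩
  -- a uniform bound M on slope differences
  obtain ⟨M, hM0, hMslope⟩ : ∃ M : ℝ, 0 ≤ M ∧ ∀ x ∈ Icc c d, ∀ h' : ℝ, 0 < h' → h' ≤ h₀ →
      (g (x + h') - g x) / h' - (g x - g (x - h')) / h' ≤ M := by
    refine ⟨(g (d + 2 * h₀) - g (d + h₀)) / h₀ - (g (c - h₀) - g (c - 2 * h₀)) / h₀, ?_, ?_⟩
    · have h1 := aux_slope_le_slope hg (memI (c - 2 * h₀) (by linarith) (by linarith))
        (memI (c - h₀) (by linarith) (by linarith)) (memI (d + h₀) (by linarith) (by linarith))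
        (memI (d + 2 * h₀) (by linarith) (by linarith)) (by linarith) (by linarith)
        (by linarith) (by linarith)
      rw [show c - h₀ - (c - 2 * h₀) = h₀ by ring, show d + 2 * h₀ - (d + h₀) = h₀ by ring] at h1
      linarith
    · intro x hx h' h'pos h'le
      have h1 := aux_slope_le_slope hg (memI x (by linarith [hx.1]) (by linarith [hx.2]))
        (memI (x + h') (by linarith [hx.1]) (by linarith [hx.2]))
        (memI (d + h₀) (by linarith) (by linarith)) (memI (d + 2 * h₀) (by linarith) (by linarith))
        (by linarith) (by linarith) (by linarith [hx.2]) (by linarith [hx.2])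
      rw [show x + h' - x = h' by ring, show d + 2 * h₀ - (d + h₀) = h₀ by ring] at h1
      have h2 := aux_slope_le_slope hg (memI (c - 2 * h₀) (by linarith) (by linarith))
        (memI (c - h₀) (by linarith) (by linarith))
        (memI (x - h') (by linarith [hx.1]) (by linarith [hx.2]))
        (memI x (by linarith [hx.1]) (by linarith [hx.2]))
        (by linarith) (by linarith) (by linarith [hx.1]) (by linarith [hx.1])
      rw [show c - h₀ - (c - 2 * h₀) = h₀ by ring, show x - (x - h') = h' by ring] at h2
      linarith
  -- interval integrability of g between points of the thickened interval
  have gInt : ∀ p q : ℝ, c - 3 * h₀ ≤ p → p ≤ d + 3 * h₀ → c - 3 * h₀ ≤ q → q ≤ d + 3 * h₀ →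
      IntervalIntegrable g volume p q := by
    intro p q hp1 hp2 hq1 hq2
    apply ContinuousOn.intervalIntegrable
    apply gcont.mono
    intro z hz
    rcases Set.mem_uIcc.1 hz with h' | h' <;>
      exact hK ⟨by linarith [h'.1, h'.2], by linarith [h'.1, h'.2]⟩
  -- tendsto via metric
  rw [Metric.tendsto_atTop]
  intro ε εpos
  obtain ⟨ε', hε'pos, hε'bound⟩ : ∃ ε' : ℝ, 0 < ε' ∧ 2 * M * (4 * ε') ≤ ε / 2 := by
    refine ⟨ε / (16 * (M + 1)), by positivity, ?_⟩
    have hne : (16:ℝ) * (M + 1) ≠ 0 := by positivity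
    have hXd : ε / (16 * (M + 1)) * (16 * (M + 1)) = ε := div_mul_cancel₀ _ hne
    have hXpos : (0:ℝ) ≤ ε / (16 * (M + 1)) := by positivity
    nlinarith [hXd, hXpos, hM0]
  obtain ⟨t, htpos, htbound⟩ : ∃ t : ℝ, 0 < t ∧ (d - c) * (2 * t ^ 2) ≤ ε / 4 := by
    have hqpos : (0:ℝ) < 8 * (d - c) + 8 := by linarith
    have htargpos : 0 < ε / (8 * (d - c) + 8) := div_pos εpos hqpos
    refine ⟨Real.sqrt (ε / (8 * (d - c) + 8)), Real.sqrt_pos.2 htargpos, ?_⟩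
    rw [Real.sq_sqrt htargpos.le]
    have hXd : ε / (8 * (d - c) + 8) * (8 * (d - c) + 8) = ε := div_mul_cancel₀ _ hqpos.ne'
    nlinarith [hXd, htargpos.le, sub_nonneg.2 hle]
  -- continuity at c and d
  obtain ⟨δc, hδcpos, hδc⟩ := Metric.continuousAt_iff.1
    (gcont.continuousAt (hIopen.mem_nhds hcI)) ε' hε'pos
  obtain ⟨δd, hδdpos, hδd⟩ := Metric.continuousAt_iff.1
    (gcont.continuousAt (hIopen.mem_nhds hdI)) ε' hε'pos
  obtain ⟨h, hhpos, hhh₀, hhc, hhd⟩ : ∃ h : ℝ, 0 < h ∧ h ≤ h₀ ∧ h ≤ δc / 2 ∧ h ≤ δd / 2 :=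
    ⟨min h₀ (min (δc / 2) (δd / 2)), lt_min hh₀ (lt_min (by linarith) (by linarith)),
      min_le_left _ _, le_trans (min_le_right _ _) (min_le_left _ _),
      le_trans (min_le_right _ _) (min_le_right _ _)⟩
  obtain ⟨Δ, hΔdef⟩ : ∃ Δ : ℝ → ℝ, Δ = fun x => (g (x + h) - g x) / h - (g x - g (x - h)) / h :=
    ⟨_, rfl⟩
  have hΔx : ∀ x : ℝ, Δ x = (g (x + h) - g x) / h - (g x - g (x - h)) / h := by
    intro x; rw [hΔdef]
  -- pointwise facts about Δ
  have hΔ0 : ∀ x ∈ Icc c d, 0 ≤ Δ x := by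
    intro x hx
    have h1 := aux_slope_le_slope hg (memI (x - h) (by linarith [hx.1]) (by linarith [hx.2]))
      (memI x (by linarith [hx.1]) (by linarith [hx.2]))
      (memI x (by linarith [hx.1]) (by linarith [hx.2]))
      (memI (x + h) (by linarith [hx.1]) (by linarith [hx.2]))
      (by linarith) (by linarith) (by linarith) (by linarith)
    rw [show x - (x - h) = h by ring, show x + h - x = h by ring] at h1
    rw [hΔx]; linarith
  have hΔM : ∀ x ∈ Icc c d, Δ x ≤ M := by
    intro x hx
    rw [hΔx]
    exact hMslope x hx h hhpos hhh₀
  -- continuity of Δ on [c,d]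
  have hc1 : ContinuousOn (fun x : ℝ => g (x + h)) (Icc c d) := by
    refine gcont.comp ((continuous_id.add continuous_const).continuousOn) ?_
    intro x hx; exact memI (x + h) (by linarith [hx.1]) (by linarith [hx.2])
  have hc3 : ContinuousOn (fun x : ℝ => g (x - h)) (Icc c d) := by
    refine gcont.comp ((continuous_id.sub continuous_const).continuousOn) ?_
    intro x hx; exact memI (x - h) (by linarith [hx.1]) (by linarith [hx.2])
  have hc2 : ContinuousOn g (Icc c d) := gcont.mono hcd
  have hΔcont : ContinuousOn Δ (Icc c d) := by
    rw [hΔdef]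
    exact ((hc1.sub hc2).div_const h).sub ((hc2.sub hc3).div_const h)
  have hΔint : IntegrableOn Δ (Icc c d) := hΔcont.integrableOn_Icc
  -- the integral of Δ over [c,d] is at most 4 ε'
  have hshift : ∫ x in Icc c d, Δ x ≤ 4 * ε' := by
    have hIcceq : ∫ x in Icc c d, Δ x = ∫ x in c..d, Δ x := by
      rw [intervalIntegral.integral_of_le hle, integral_Icc_eq_integral_Ioc]
    have i1 : IntervalIntegrable (fun x : ℝ => g (x + h)) volume c d := by
      apply ContinuousOn.intervalIntegrable
      rwa [Set.uIcc_of_le hle]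
    have i2 : IntervalIntegrable g volume c d :=
      gInt c d (by linarith) (by linarith) (by linarith) (by linarith)
    have i3 : IntervalIntegrable (fun x : ℝ => g (x - h)) volume c d := by
      apply ContinuousOn.intervalIntegrable
      rwa [Set.uIcc_of_le hle]
    have hcongr : ∫ x in c..d, Δ x =
        ((∫ x in c..d, g (x + h)) + (∫ x in c..d, g (x - h)) - 2 * ∫ x in c..d, g x) / h := by
      rw [show ((∫ x in c..d, g (x + h)) + (∫ x in c..d, g (x - h)) - 2 * ∫ x in c..d, g x)
          = ∫ x in c..d, (g (x + h) + g (x - h) - 2 * g x) from ?_]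
      · rw [← intervalIntegral.integral_div]
        apply intervalIntegral.integral_congr
        intro x _
        rw [hΔx]
        field_simp
        ring
      · rw [intervalIntegral.integral_sub (i1.add i3) (i2.const_mul 2),
          intervalIntegral.integral_add i1 i3, intervalIntegral.integral_const_mul]
    have comp1 : (∫ x in c..d, g (x + h)) = ∫ x in (c + h)..(d + h), g x :=
      intervalIntegral.integral_comp_add_right g h
    have comp2 : (∫ x in c..d, g (x - h)) = ∫ x in (c - h)..(d - h), g x :=
      intervalIntegral.integral_comp_sub_right g h
    have A1 : (∫ x in c..(c + h), g x) + (∫ x in (c + h)..(d + h), g x) = ∫ x in c..(d + h), g x :=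
      intervalIntegral.integral_add_adjacent_intervals
        (gInt _ _ (by linarith) (by linarith) (by linarith) (by linarith))
        (gInt _ _ (by linarith) (by linarith) (by linarith) (by linarith))
    have A2 : (∫ x in c..d, g x) + (∫ x in d..(d + h), g x) = ∫ x in c..(d + h), g x :=
      intervalIntegral.integral_add_adjacent_intervals
        (gInt _ _ (by linarith) (by linarith) (by linarith) (by linarith))
        (gInt _ _ (by linarith) (by linarith) (by linarith) (by linarith))
    have B1 : (∫ x in (c - h)..c, g x) + (∫ x in c..(d - h), g x) = ∫ x in (c - h)..(d - h), g x :=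
      intervalIntegral.integral_add_adjacent_intervals
        (gInt _ _ (by linarith) (by linarith) (by linarith) (by linarith))
        (gInt _ _ (by linarith) (by linarith) (by linarith) (by linarith))
    have B2 : (∫ x in c..(d - h), g x) + (∫ x in (d - h)..d, g x) = ∫ x in c..d, g x :=
      intervalIntegral.integral_add_adjacent_intervals
        (gInt _ _ (by linarith) (by linarith) (by linarith) (by linarith))
        (gInt _ _ (by linarith) (by linarith) (by linarith) (by linarith))
    have edge : ∀ a b w : ℝ, IntervalIntegrable g volume a b → b - a = h →
        (∀ x ∈ Set.uIoc a b, |g x - g w| ≤ ε') →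
        |(∫ x in a..b, g x) - g w * h| ≤ ε' * h := by
      intro a b w hint hba hbound
      have heq : (∫ x in a..b, g x) - g w * h = ∫ x in a..b, (g x - g w) := by
        rw [intervalIntegral.integral_sub hint intervalIntegrable_const,
          intervalIntegral.integral_const, smul_eq_mul, hba]
        ring
      rw [heq]
      have hb := intervalIntegral.norm_integral_le_of_norm_le_const
        (C := ε') (f := fun x => g x - g w) (a := a) (b := b) ?_
      · rwa [Real.norm_eq_abs, show |b - a| = h by rw [hba]; exact abs_of_pos hhpos] at hb
      · intro x hx
        rw [Real.norm_eq_abs]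
        exact hbound x hx
    have Edp : |(∫ x in d..(d + h), g x) - g d * h| ≤ ε' * h := by
      apply edge _ _ _ (gInt _ _ (by linarith) (by linarith) (by linarith) (by linarith)) (by ring)
      intro x hx
      rcases Set.mem_uIoc.1 hx with h' | h'
      · refine le_of_lt (hδd ?_)
        rw [Real.dist_eq, abs_lt]; constructor <;> [linarith [h'.1]; linarith [h'.2]]
      · exfalso; linarith [h'.1, h'.2]
    have Edm : |(∫ x in (d - h)..d, g x) - g d * h| ≤ ε' * h := by
      apply edge _ _ _ (gInt _ _ (by linarith) (by linarith) (by linarith) (by linarith)) (by ring)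
      intro x hx
      rcases Set.mem_uIoc.1 hx with h' | h'
      · refine le_of_lt (hδd ?_)
        rw [Real.dist_eq, abs_lt]; constructor <;> [linarith [h'.1]; linarith [h'.2]]
      · exfalso; linarith [h'.1, h'.2]
    have Ecp : |(∫ x in c..(c + h), g x) - g c * h| ≤ ε' * h := by
      apply edge _ _ _ (gInt _ _ (by linarith) (by linarith) (by linarith) (by linarith)) (by ring)
      intro x hx
      rcases Set.mem_uIoc.1 hx with h' | h'
      · refine le_of_lt (hδc ?_)
        rw [Real.dist_eq, abs_lt]; constructor <;> [linarith [h'.1]; linarith [h'.2]]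
      · exfalso; linarith [h'.1, h'.2]
    have Ecm : |(∫ x in (c - h)..c, g x) - g c * h| ≤ ε' * h := by
      apply edge _ _ _ (gInt _ _ (by linarith) (by linarith) (by linarith) (by linarith)) (by ring)
      intro x hx
      rcases Set.mem_uIoc.1 hx with h' | h'
      · refine le_of_lt (hδc ?_)
        rw [Real.dist_eq, abs_lt]; constructor <;> [linarith [h'.1]; linarith [h'.2]]
      · exfalso; linarith [h'.1, h'.2]
    have hEdp := abs_le.1 Edp
    have hEdm := abs_le.1 Edm
    have hEcp := abs_le.1 Ecp
    have hEcm := abs_le.1 Ecm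
    rw [hIcceq, hcongr, comp1, comp2, div_le_iff₀ hhpos]
    linarith [hEdp.1, hEdp.2, hEdm.1, hEdm.2, hEcp.1, hEcp.2, hEcm.1, hEcm.2]
  -- uniform convergence on the thickened interval
  have huc := (Metric.tendstoUniformlyOn_iff.1
    (hunif (Icc (c - 3 * h₀) (d + 3 * h₀)) isCompact_Icc hK)) (t * h / 2) (by positivity)
  rw [eventually_atTop] at huc
  obtain ⟨N, hN⟩ := huc
  refine ⟨N, fun n hn => ?_⟩
  have hfg := hN n hn
  have hdist : ∀ z : ℝ, c - 3 * h₀ ≤ z → z ≤ d + 3 * h₀ →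
      -(t * h / 2) < f n z - g z ∧ f n z - g z < t * h / 2 := by
    intro z h1 h2
    have hz := hfg z ⟨h1, h2⟩
    rw [Real.dist_eq, abs_sub_comm, abs_lt] at hz
    exact hz
  -- pointwise bound
  have hpoint : ∀ x ∈ Icc c d, (Dl n x - Dlg x) ^ 2 ≤ 2 * M * Δ x + 2 * t ^ 2 := by
    intro x hx
    have hxmhI : x - h ∈ I := memI _ (by linarith [hx.1]) (by linarith [hx.2])
    have hxphI : x + h ∈ I := memI _ (by linarith [hx.1]) (by linarith [hx.2])
    have hxI : x ∈ I := hcd hx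
    obtain ⟨bf1, bf2⟩ := aux_left_deriv_bounds (hf n) hxmhI hxphI
      (by linarith) (by linarith) (hDl n x hxI)
    rw [show x - (x - h) = h by ring] at bf1
    rw [show x + h - x = h by ring] at bf2
    obtain ⟨bg1, bg2⟩ := aux_left_deriv_bounds hg hxmhI hxphI
      (by linarith) (by linarith) (hDlg x hxI)
    rw [show x - (x - h) = h by ring] at bg1
    rw [show x + h - x = h by ring] at bg2
    have d0 := hdist x (by linarith [hx.1]) (by linarith [hx.2])
    have dm := hdist (x - h) (by linarith [hx.1]) (by linarith [hx.2])
    have dp := hdist (x + h) (by linarith [hx.1]) (by linarith [hx.2])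
    have heq1 : (g (x + h) - g x + t * h) / h = (g (x + h) - g x) / h + t := by
      rw [add_div, mul_div_assoc, div_self hhpos.ne', mul_one]
    have heq2 : (g x - g (x - h) - t * h) / h = (g x - g (x - h)) / h - t := by
      rw [sub_div, mul_div_assoc, div_self hhpos.ne', mul_one]
    have u1 : Dl n x ≤ (g (x + h) - g x) / h + t := by
      refine bf2.trans ?_
      rw [← heq1]
      exact div_le_div_of_nonneg_right (by linarith [dp.2, d0.1]) hhpos.le
    have u2 : (g x - g (x - h)) / h - t ≤ Dl n x := by
      refine le_trans ?_ bf1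
      rw [← heq2]
      exact div_le_div_of_nonneg_right (by linarith [d0.2, dm.1]) hhpos.le
    have hΔx0 := hΔ0 x hx
    have hΔxM := hΔM x hx
    have hΔxe := hΔx x
    have hsq : (Dl n x - Dlg x) ^ 2 ≤ (Δ x + t) ^ 2 := by
      apply sq_le_sq'
      · rw [hΔxe]; linarith
      · rw [hΔxe]; linarith
    nlinarith [hsq, sq_nonneg (Δ x - t), mul_le_mul_of_nonneg_right hΔxM hΔx0]
  -- integral comparison
  have hvol : volume (Icc c d) < ⊤ := by
    rw [Real.volume_Icc]; exact ENNReal.ofReal_lt_top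
  have hGint : IntegrableOn (fun z : ℝ => 2 * M * Δ z + 2 * t ^ 2) (Icc c d) :=
    (hΔint.const_mul _).add (integrableOn_const hvol.ne)
  have step1 : ∫ z in Icc c d, (Dl n z - Dlg z) ^ 2 ≤
      ∫ z in Icc c d, (2 * M * Δ z + 2 * t ^ 2) :=
    integral_mono_of_nonneg (Eventually.of_forall fun z => sq_nonneg _) hGint
      (ae_restrict_of_forall_mem measurableSet_Icc hpoint)
  have step2 : ∫ z in Icc c d, (2 * M * Δ z + 2 * t ^ 2) =
      2 * M * (∫ z in Icc c d, Δ z) + (d - c) * (2 * t ^ 2) := by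
    rw [integral_add (hΔint.const_mul _) (integrableOn_const hvol.ne),
      integral_const_mul, setIntegral_const, smul_eq_mul, measureReal_def, Real.volume_Icc,
      ENNReal.toReal_ofReal (by linarith)]
  have hA : 2 * M * (∫ z in Icc c d, Δ z) ≤ 2 * M * (4 * ε') :=
    mul_le_mul_of_nonneg_left hshift (by linarith)
  have hnonneg : 0 ≤ ∫ z in Icc c d, (Dl n z - Dlg z) ^ 2 :=
    integral_nonneg fun z => sq_nonneg _
  rw [Real.dist_eq, sub_zero, abs_of_nonneg hnonneg]
  calc ∫ z in Icc c d, (Dl n z - Dlg z) ^ 2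
      ≤ 2 * M * (∫ z in Icc c d, Δ z) + (d - c) * (2 * t ^ 2) := by rw [← step2]; exact step1
    _ ≤ ε / 2 + ε / 4 := by linarith
    _ < ε := by linarith
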